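/- Let p be a prime, g ≥ 1 an integer, and a₁, …, a_{g−1} integers. For an integer (or complex number) t, let F(a₁, …, a_{g−1}, t) be the monic polynomial (x^{2g} + p^g) + a₁(x^{2g−1} + p^{g−1}x) + a₂(x^{2g−2} + p^{g−2}x²) + ⋯ + a_{g−1}(x^{g+1} + p·x^{g−1}) + t·x^g. Then there exists a polynomial Q ∈ ℂ[T] of degree strictly less than 2g such that for all t, disc(F(a₁, …, a_{g−1}, t)) = g^{2g} p^{g(g−1)} t^{2g} + Q(t). -/

import Mathlib

open Polynomial Finset

lemma multiset_listing {α : Type*} (m : Multiset α) (n : ℕ) (hn : Multiset.card m = n) :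
    ∃ b : Fin n → α, m = (Finset.univ.val.map b) := by
  induction m using Multiset.induction_on generalizing n with
  | empty =>
      refine ⟨fun i => absurd i.2 (by simp [← hn]), ?_⟩
      obtain rfl : n = 0 := by simp [← hn]
      simp
  | cons a s ih =>
      obtain ⟨k, rfl⟩ : ∃ k, n = k + 1 := ⟨Multiset.card s, by simp [← hn]⟩
      obtain ⟨b, hb⟩ := ih (n := k) (by simpa using hn)
      refine ⟨Fin.cons a b, ?_⟩
      rw [hb, Fin.univ_val_map, Fin.univ_val_map, List.ofFn_succ]
      simp

lemma poly_listing (f : Polynomial ℂ) (n : ℕ) (hf : f ≠ 0) (hn : f.natDegree = n) :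
    ∃ b : Fin n → ℂ, f = C f.leadingCoeff * ∏ i, (X - C (b i)) := by
  have hs : f.Splits := IsAlgClosed.splits f
  have hcard : Multiset.card f.roots = n := by
    rw [← hn]; exact (Polynomial.splits_iff_card_roots).mp hs
  obtain ⟨b, hb⟩ := multiset_listing f.roots n hcard
  refine ⟨b, ?_⟩
  conv_lhs => rw [hs.eq_prod_roots]
  rw [hb]
  congr 1
  rw [Multiset.map_map]
  rfl

lemma poly_listing_monic (f : Polynomial ℂ) (n : ℕ) (hm : f.Monic) (hn : f.natDegree = n) :
    ∃ b : Fin n → ℂ, f = ∏ i, (X - C (b i)) := by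
  obtain ⟨b, hb⟩ := poly_listing f n hm.ne_zero hn
  exact ⟨b, by rwa [hm.leadingCoeff, map_one, one_mul] at hb⟩

lemma eval_derivative_prod_X_sub_C {I : Type*} [Fintype I] [DecidableEq I] (s : I → ℂ) (i : I) :
    (∏ j, (X - C (s j)) : Polynomial ℂ).derivative.eval (s i)
      = ∏ j ∈ univ.erase i, (s i - s j) := by
  have hd : (∏ j, (X - C (s j)) : Polynomial ℂ).derivative
      = ∑ k, (∏ j ∈ univ.erase k, (X - C (s j))) * 1 := by
    rw [Finset.prod_eq_multiset_prod, derivative_prod]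
    rw [Finset.sum_eq_multiset_sum]
    congr 1
    refine Multiset.map_congr rfl fun k _ => ?_
    rw [← Finset.erase_val, ← Finset.prod_eq_multiset_prod]
    simp
  rw [hd, eval_finset_sum]
  rw [Finset.sum_eq_single i]
  · simp [eval_prod]
  · intro k _ hk
    rw [eval_mul, eval_one, mul_one, eval_prod]
    apply Finset.prod_eq_zero (Finset.mem_erase.2 ⟨Ne.symm hk, Finset.mem_univ i⟩)
    simp
  · simp

lemma prod_prod_erase_eq {I : Type*} [Fintype I] [DecidableEq I] (s : I → ℂ) :
    ∏ i, ∏ j ∈ univ.erase i, (s i - s j)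
      = ((∏ j, (X - C (s j)) : Polynomial ℂ).roots.map
          (∏ j, (X - C (s j)) : Polynomial ℂ).derivative.eval).prod := by
  have hroots : (∏ j, (X - C (s j)) : Polynomial ℂ).roots = univ.val.map s := by
    have : (∏ j, (X - C (s j)) : Polynomial ℂ)
        = ((univ.val.map s).map fun a => X - C a).prod := by
      rw [Multiset.map_map]; rfl
    rw [this, roots_multiset_prod_X_sub_C]
  rw [hroots, Multiset.map_map]
  rw [← Finset.prod_eq_multiset_prod]
  · exact Finset.prod_congr rfl fun i _ => (eval_derivative_prod_X_sub_C s i).symm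

lemma sign_lemma (n : ℕ) (r : Fin n → ℂ) :
    ∏ i, ∏ j ∈ Finset.Ioi i, (r i - r j) ^ 2
      = (-1 : ℂ) ^ (n * (n-1) / 2) * ∏ i, ∏ j ∈ univ.erase i, (r i - r j) := by
  have herase : ∀ i : Fin n, univ.erase i = Finset.Iio i ∪ Finset.Ioi i := by
    intro i
    ext j
    simp only [Finset.mem_erase, Finset.mem_univ, and_true, Finset.mem_union,
      Finset.mem_Iio, Finset.mem_Ioi]
    exact ne_iff_lt_or_gt
  have hdisj : ∀ i : Fin n, Disjoint (Finset.Iio i) (Finset.Ioi i) := fun i =>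
    Finset.disjoint_left.2 fun j hj hj2 => absurd (Finset.mem_Ioi.1 hj2)
      (not_lt.2 (le_of_lt (Finset.mem_Iio.1 hj)))
  have hswap : (∏ i, ∏ j ∈ Finset.Ioi i, (r i - r j))
      = ∏ i, ∏ j ∈ Finset.Iio i, (r j - r i) := by
    rw [Finset.prod_comm' (t' := (univ : Finset (Fin n))) (s' := fun j => Finset.Iio j)
      (fun x y => by simp)]
  have hcount : ∑ i : Fin n, (Finset.Iio i).card = n * (n-1) / 2 := by
    have h1 : ∑ i : Fin n, (Finset.Iio i).card = ∑ i ∈ Finset.range n, i := by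
      rw [← Fin.sum_univ_eq_sum_range]
      exact Finset.sum_congr rfl fun i _ => by rw [Fin.card_Iio]
    rw [h1, Finset.sum_range_id]
  calc ∏ i, ∏ j ∈ Finset.Ioi i, (r i - r j) ^ 2
      = (∏ i, ∏ j ∈ Finset.Ioi i, (r i - r j)) * ∏ i, ∏ j ∈ Finset.Ioi i, (r i - r j) := by
        rw [← Finset.prod_mul_distrib]
        exact Finset.prod_congr rfl fun i _ => by
          rw [← Finset.prod_mul_distrib]
          exact Finset.prod_congr rfl fun j _ => sq (r i - r j)
    _ = (∏ i, ∏ j ∈ Finset.Iio i, ((-1) * (r i - r j))) * ∏ i, ∏ j ∈ Finset.Ioi i, (r i - r j) := by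
        rw [hswap]
        congr 1
        exact Finset.prod_congr rfl fun i _ => Finset.prod_congr rfl fun j _ => by ring
    _ = ((-1 : ℂ) ^ (n * (n-1) / 2) * ∏ i, ∏ j ∈ Finset.Iio i, (r i - r j))
          * ∏ i, ∏ j ∈ Finset.Ioi i, (r i - r j) := by
        congr 1
        rw [← hcount, ← Finset.prod_pow_eq_pow_sum, ← Finset.prod_mul_distrib]
        refine Finset.prod_congr rfl fun i _ => ?_
        rw [Finset.prod_mul_distrib, Finset.prod_const]
    _ = (-1 : ℂ) ^ (n * (n-1) / 2) * ∏ i, ∏ j ∈ univ.erase i, (r i - r j) := by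
        rw [mul_assoc, ← Finset.prod_mul_distrib]
        congr 1
        refine Finset.prod_congr rfl fun i _ => ?_
        rw [herase i, Finset.prod_union (hdisj i)]

noncomputable def qq (p : ℂ) : ℕ → Polynomial ℂ
  | 0 => 2
  | 1 => X
  | (k+2) => X * qq p (k+1) - C p * qq p k

lemma qq_natDegree_le (p : ℂ) : ∀ k, (qq p k).natDegree ≤ k := by
  have H : ∀ k, (qq p k).natDegree ≤ k ∧ (qq p (k+1)).natDegree ≤ k+1 := by
    intro k
    induction k with
    | zero =>
        refine ⟨?_, by simp [qq]⟩
        show (2 : Polynomial ℂ).natDegree ≤ 0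
        simp
    | succ n ih =>
        refine ⟨ih.2, ?_⟩
        have e : qq p (n+1+1) = X * qq p (n+1) - C p * qq p n := rfl
        rw [e]
        refine le_trans (natDegree_sub_le _ _) ?_
        rw [max_le_iff]
        constructor
        · refine le_trans (natDegree_mul_le) ?_
          calc X.natDegree + (qq p (n+1)).natDegree ≤ 1 + (n+1) :=
                Nat.add_le_add natDegree_X_le ih.2
            _ = n + 2 := by omega
        · refine le_trans (natDegree_mul_le) ?_
          simpa [natDegree_C] using le_trans ih.1 (by omega)
  exact fun k => (H k).1

lemma qq_coeff_top (p : ℂ) : ∀ k, 1 ≤ k → (qq p k).coeff k = 1 := by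
  have H : ∀ k, (qq p (k+1)).coeff (k+1) = 1 := by
    intro k
    induction k with
    | zero => simp [qq]
    | succ n ih =>
        have e : qq p (n+1+1) = X * qq p (n+1) - C p * qq p n := rfl
        rw [e]
        rw [coeff_sub, coeff_X_mul, ih]
        have h0 : (C p * qq p n).coeff (n+1+1) = 0 := by
          refine coeff_eq_zero_of_natDegree_lt ?_
          refine lt_of_le_of_lt natDegree_mul_le ?_
          simpa [natDegree_C] using lt_of_le_of_lt (qq_natDegree_le p n) (by omega : n < n+1+1)
        rw [h0]; ring
  intro k hk
  obtain ⟨m, rfl⟩ : ∃ m, k = m + 1 := ⟨k-1, by omega⟩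
  exact H m

lemma qq_monic (p : ℂ) (k : ℕ) (hk : 1 ≤ k) : (qq p k).Monic := by
  have h1 := qq_coeff_top p k hk
  have h2 := qq_natDegree_le p k
  -- Monic: natDegree = k and leading coeff 1
  have hdeg : (qq p k).natDegree = k := by
    refine le_antisymm h2 (le_natDegree_of_ne_zero ?_)
    rw [h1]; exact one_ne_zero
  unfold Polynomial.Monic
  rw [Polynomial.leadingCoeff, hdeg, h1]
noncomputable abbrev KK := FractionRing (Polynomial ℂ)

noncomputable def phi : Polynomial ℂ →+* KK := algebraMap (Polynomial ℂ) KK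

lemma phi_inj : Function.Injective phi := IsFractionRing.injective (Polynomial ℂ) KK

lemma z_ne : phi X ≠ 0 := fun h => X_ne_zero (phi_inj (by simpa using h))

noncomputable def EE (p : ℂ) : Polynomial ℂ →+* KK :=
  Polynomial.eval₂RingHom (phi.comp (C : ℂ →+* Polynomial ℂ))
    (phi X + phi (C p) * (phi X)⁻¹)

lemma EE_X (p : ℂ) : EE p X = phi X + phi (C p) * (phi X)⁻¹ := by
  simp [EE]

lemma EE_C (p c : ℂ) : EE p (C c) = phi (C c) := by
  simp [EE]

lemma EE_qq (p : ℂ) : ∀ k, EE p (qq p k) = (phi X)^k + (phi (C p))^k * ((phi X)⁻¹)^k := by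
  set z := phi X with hzdef
  set c := phi (C p) with hcdef
  have hz : z * z⁻¹ = 1 := mul_inv_cancel₀ z_ne
  have H : ∀ k, (EE p (qq p k) = z^k + c^k * (z⁻¹)^k)
      ∧ (EE p (qq p (k+1)) = z^(k+1) + c^(k+1) * (z⁻¹)^(k+1)) := by
    intro k
    induction k with
    | zero =>
        constructor
        · have h0 : qq p 0 = 2 := rfl
          rw [h0, map_ofNat]
          norm_num
        · have : qq p 1 = X := rfl
          rw [this, EE_X]
          simp
          rfl
    | succ n ih =>
        refine ⟨ih.2, ?_⟩
        have e : qq p (n+1+1) = X * qq p (n+1) - C p * qq p n := rfl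
        rw [e, map_sub, map_mul, map_mul, EE_X, EE_C, ih.1, ih.2]
        have expand : (z + c * z⁻¹) * (z^(n+1) + c^(n+1) * (z⁻¹)^(n+1))
            - c * (z^n + c^n * (z⁻¹)^n)
            = z^(n+1+1) + c^(n+1+1) * (z⁻¹)^(n+1+1)
            + (c^(n+1) * (z⁻¹)^n + c * z^n) * (z * z⁻¹ - 1) := by
          ring
        rw [expand, hz]
        ring
  exact fun k => (H k).1

noncomputable def Psi0 (p : ℂ) (g : ℕ) (a : ℕ → ℤ) : Polynomial ℂ :=
  qq p g + ∑ i ∈ Finset.Ioo 0 g, C ((a i : ℂ)) * qq p (g - i)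

noncomputable def Fpoly (p : ℂ) (g : ℕ) (a : ℕ → ℤ) (t : ℂ) : Polynomial ℂ :=
  (X ^ (2 * g) + C (p ^ g)) +
    (∑ i ∈ Finset.Ioo 0 g, C ((a i : ℂ)) * (X ^ (2 * g - i) + C (p ^ (g - i)) * X ^ i)) +
      C t * X ^ g

lemma bridge1 (p : ℂ) (g : ℕ) (a : ℕ → ℤ) (t : ℂ) :
    phi (Fpoly p g a t) = (phi X)^g * EE p (Psi0 p g a + C t) := by
  set z := phi X with hzdef
  set c := phi (C p) with hcdef
  have hz : z * z⁻¹ = 1 := mul_inv_cancel₀ z_ne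
  have hk : ∀ k, k ≤ g → z^g * (z^k + c^k*(z⁻¹)^k) = z^(g+k) + c^k * z^(g-k) := by
    intro k hkg
    have h1 : z^g * z^k = z^(g+k) := by rw [← pow_add]
    have h2 : z^g * (z⁻¹)^k = z^(g-k) := by
      have h3 : z^g = z^(g-k) * z^k := by rw [← pow_add]; congr 1; omega
      rw [h3, mul_assoc, ← mul_pow, hz, one_pow, mul_one]
    calc z^g * (z^k + c^k*(z⁻¹)^k) = z^g * z^k + c^k * (z^g * (z⁻¹)^k) := by ring
      _ = z^(g+k) + c^k * z^(g-k) := by rw [h1, h2]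
  have lhs : phi (Fpoly p g a t)
      = z^(2*g) + c^g + (∑ i ∈ Finset.Ioo 0 g,
          phi (C ((a i : ℂ))) * (z^(2*g-i) + c^(g-i) * z^i)) + phi (C t) * z^g := by
    simp only [Fpoly, map_add, map_mul, map_sum, map_pow, C_pow]
    rfl
  have rhs : z^g * EE p (Psi0 p g a + C t)
      = z^g * (z^g + c^g * (z⁻¹)^g)
        + (∑ i ∈ Finset.Ioo 0 g,
            phi (C ((a i : ℂ))) * (z^g * (z^(g-i) + c^(g-i) * (z⁻¹)^(g-i))))
        + z^g * phi (C t) := by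
    simp only [Psi0, map_add, map_sum, map_mul, EE_C, EE_qq, ← hzdef, ← hcdef]
    rw [mul_add, mul_add, Finset.mul_sum]
    congr 1
    congr 1
    refine Finset.sum_congr rfl fun i hi => ?_
    ring
  rw [lhs, rhs, hk g le_rfl]
  have e1 : g + g = 2*g := by omega
  have e2 : z^(g-g) = 1 := by rw [Nat.sub_self, pow_zero]
  rw [e1, e2, mul_one]
  congr 1
  · congr 1
    refine Finset.sum_congr rfl fun i hi => ?_
    obtain ⟨hi0, hig⟩ := Finset.mem_Ioo.1 hi
    have e3 : g + (g-i) = 2*g - i := by omega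
    have e4 : g - (g-i) = i := by omega
    rw [hk (g-i) (by omega), e3, e4]
  · ring

lemma bridge2 (p : ℂ) (g : ℕ) (a : ℕ → ℤ) (t : ℂ) (b : Fin g → ℂ)
    (hb : Psi0 p g a + C t = ∏ k, (X - C (b k))) :
    Fpoly p g a t = ∏ k, (X^2 - C (b k) * X + C p) := by
  apply phi_inj
  rw [bridge1 p g a t, hb, map_prod, map_prod]
  set z := phi X with hzdef
  set c := phi (C p) with hcdef
  have hz : z * z⁻¹ = 1 := mul_inv_cancel₀ z_ne
  have hcard : (Finset.univ : Finset (Fin g)).card = g := by simp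
  have step : z ^ g * ∏ x : Fin g, (EE p) (X - C (b x))
      = ∏ x : Fin g, (z * (EE p) (X - C (b x))) := by
    rw [Finset.prod_mul_distrib, Finset.prod_const, hcard]
  rw [step]
  refine Finset.prod_congr rfl fun k _ => ?_
  rw [map_sub, EE_X, EE_C, map_add, map_sub, map_mul, map_pow]
  have expand : z * (z + c * z⁻¹ - phi (C (b k)))
      = z^2 + z * z⁻¹ * c - phi (C (b k)) * z := by ring
  rw [← hzdef, ← hcdef, expand, hz, one_mul]
  ring

lemma Psi0_sum_deg (p : ℂ) (g : ℕ) (a : ℕ → ℤ) (hg : 1 ≤ g) :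
    (∑ i ∈ Finset.Ioo 0 g, C ((a i : ℂ)) * qq p (g - i)).natDegree ≤ g - 1 := by
  refine le_trans (natDegree_sum_le _ _) ?_
  simp only [Finset.fold_max_le]
  constructor
  · omega
  · intro i hi
    obtain ⟨hi0, hig⟩ := Finset.mem_Ioo.1 (by simpa using hi)
    refine le_trans natDegree_mul_le ?_
    simp only [natDegree_C, zero_add]
    exact le_trans (qq_natDegree_le p (g-i)) (by omega)

lemma Psi0_monic (p : ℂ) (g : ℕ) (a : ℕ → ℤ) (hg : 1 ≤ g) : (Psi0 p g a).Monic := by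
  refine Polynomial.Monic.add_of_left (qq_monic p g hg) ?_
  have h1 : (qq p g).degree = g := by
    rw [degree_eq_natDegree (qq_monic p g hg).ne_zero]
    norm_cast
    exact le_antisymm (qq_natDegree_le p g) (le_natDegree_of_ne_zero (by
      rw [qq_coeff_top p g hg]; exact one_ne_zero))
  rw [h1]
  refine lt_of_le_of_lt (degree_le_natDegree.trans ?_) (by norm_cast; omega : ((g-1 : ℕ) : WithBot ℕ) < (g : ℕ))
  exact_mod_cast Nat.cast_le.2 (Psi0_sum_deg p g a hg)

lemma Psi0_natDegree (p : ℂ) (g : ℕ) (a : ℕ → ℤ) (hg : 1 ≤ g) : (Psi0 p g a).natDegree = g := by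
  have hqd : (qq p g).natDegree = g :=
    le_antisymm (qq_natDegree_le p g) (le_natDegree_of_ne_zero (by
      rw [qq_coeff_top p g hg]; exact one_ne_zero))
  rw [Psi0]
  rw [natDegree_add_eq_left_of_natDegree_lt, hqd]
  rw [hqd]
  exact lt_of_le_of_lt (Psi0_sum_deg p g a hg) (by omega)

lemma derivative_finset_prod {I : Type*} [Fintype I] [DecidableEq I] (q : I → Polynomial ℂ) :
    derivative (∏ i, q i) = ∑ k, (∏ j ∈ univ.erase k, q j) * derivative (q k) := by
  rw [Finset.prod_eq_multiset_prod, derivative_prod, Finset.sum_eq_multiset_sum]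
  congr 1

lemma Psi0_deriv_coeff (p : ℂ) (g : ℕ) (a : ℕ → ℤ) (hg : 1 ≤ g) :
    (derivative (Psi0 p g a)).coeff (g-1) = g := by
  rw [coeff_derivative]
  have e1 : (g-1) + 1 = g := by omega
  rw [e1]
  have hc : (Psi0 p g a).coeff g = 1 := by
    have hm := Psi0_monic p g a hg
    have hd := Psi0_natDegree p g a hg
    have := hm.coeff_natDegree
    rwa [hd] at this
  rw [hc, one_mul]
  have : ((g-1 : ℕ) : ℂ) = (g : ℂ) - 1 := by
    push_cast [Nat.cast_sub hg]
    ring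
  rw [this]
  ring

lemma Psi0_deriv_natDegree (p : ℂ) (g : ℕ) (a : ℕ → ℤ) (hg : 1 ≤ g) :
    (derivative (Psi0 p g a)).natDegree = g - 1 := by
  refine le_antisymm (le_trans (natDegree_derivative_le _) (by rw [Psi0_natDegree p g a hg])) ?_
  refine le_natDegree_of_ne_zero ?_
  rw [Psi0_deriv_coeff p g a hg]
  exact_mod_cast Nat.cast_ne_zero.2 (by omega : g ≠ 0)

lemma Psi0_deriv_leadingCoeff (p : ℂ) (g : ℕ) (a : ℕ → ℤ) (hg : 1 ≤ g) :
    (derivative (Psi0 p g a)).leadingCoeff = g := by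
  rw [Polynomial.leadingCoeff, Psi0_deriv_natDegree p g a hg, Psi0_deriv_coeff p g a hg]

lemma Psi0_deriv_ne_zero (p : ℂ) (g : ℕ) (a : ℕ → ℤ) (hg : 1 ≤ g) :
    derivative (Psi0 p g a) ≠ 0 := by
  intro h
  have := Psi0_deriv_coeff p g a hg
  rw [h] at this
  simp at this
  exact (by omega : g ≠ 0) (by exact_mod_cast this.symm)

lemma quad_monic (b c : ℂ) : (X^2 - C b * X + C c).Monic := by
  have : (X^2 - C b * X + C c : Polynomial ℂ) = X^2 + (C c - C b * X) := by ring
  rw [this]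
  apply monic_X_pow_add
  refine lt_of_le_of_lt (degree_sub_le _ _) ?_
  rw [max_lt_iff]
  constructor
  · exact lt_of_le_of_lt degree_C_le (by norm_num)
  · refine lt_of_le_of_lt (degree_mul_le _ _) ?_
    refine lt_of_le_of_lt (add_le_add degree_C_le degree_X_le) ?_
    norm_num

lemma quad_natDegree (b c : ℂ) : (X^2 - C b * X + C c).natDegree = 2 := by
  have h := quad_monic b c
  have : (X^2 - C b * X + C c : Polynomial ℂ) = X^2 + (C c - C b * X) := by ring
  rw [this]
  rw [natDegree_add_eq_left_of_degree_lt]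
  · exact natDegree_X_pow 2
  · rw [degree_X_pow]
    refine lt_of_le_of_lt (degree_sub_le _ _) ?_
    rw [max_lt_iff]
    constructor
    · exact lt_of_le_of_lt degree_C_le (by norm_num)
    · refine lt_of_le_of_lt (degree_mul_le _ _) ?_
      refine lt_of_le_of_lt (add_le_add degree_C_le degree_X_le) ?_
      norm_num
open Polynomial in
/-- The discriminant of the monic polynomial
`F(a₁,…,a_{g−1},t) = (x^{2g}+p^g) + a₁(x^{2g−1}+p^{g−1}x) + ⋯ + a_{g−1}(x^{g+1}+p·x^{g−1}) + t·x^g`,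
viewed as a polynomial in `t`, equals `g^{2g} p^{g(g−1)} t^{2g}` plus lower-order terms in `t`.
The discriminant is expressed via a listing `r` of the roots with multiplicity as
`∏_{i<j} (r_i − r_j)²`. -/
theorem disc_F_leading_term (p : ℕ) (hp : p.Prime) (g : ℕ) (hg : 1 ≤ g) (a : ℕ → ℤ) :
    ∃ Q : Polynomial ℂ, Q.degree < (2 * g : ℕ) ∧
      ∀ (t : ℂ) (r : Fin (2 * g) → ℂ),
        (∏ i, (X - C (r i))) =
            (X ^ (2 * g) + C ((p : ℂ) ^ g)) +
              (∑ i ∈ Finset.Ioo 0 g,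
                C ((a i : ℂ)) * (X ^ (2 * g - i) + C ((p : ℂ) ^ (g - i)) * X ^ i)) +
              C t * X ^ g →
          ∏ i : Fin (2 * g), ∏ j ∈ Finset.Ioi i, (r i - r j) ^ 2 =
            (g : ℂ) ^ (2 * g) * (p : ℂ) ^ (g * (g - 1)) * t ^ (2 * g) + Q.eval t := by
  set pc : ℂ := (p : ℂ) with hpc
  set A : ℂ := (g : ℂ) ^ (2*g) * pc ^ (g*(g-1)) with hA
  have hDne := Psi0_deriv_ne_zero pc g a hg
  obtain ⟨β, hβ⟩ := poly_listing (derivative (Psi0 pc g a)) (g-1) hDne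
    (Psi0_deriv_natDegree pc g a hg)
  rw [Psi0_deriv_leadingCoeff pc g a hg] at hβ
  obtain ⟨c0, hc0⟩ := IsAlgClosed.exists_pow_nat_eq (4 * pc) (n := 2) (by norm_num)
  set u := (Psi0 pc g a).eval c0 with hu
  set v := (Psi0 pc g a).eval (-c0) with hv
  set w : Fin (g-1) → ℂ := fun m => (Psi0 pc g a).eval (β m) with hw
  set M : Polynomial ℂ := (X + C u) * ((X + C v) * ∏ m, (X + C (w m))^2) with hM
  have hm2 : ((X + C v) * ∏ m, (X + C (w m))^2 : Polynomial ℂ).Monic :=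
    (monic_X_add_C v).mul (monic_prod_of_monic _ _ fun m _ => (monic_X_add_C (w m)).pow 2)
  have hMmonic : M.Monic := (monic_X_add_C u).mul hm2
  have hMdeg : M.natDegree = 2*g := by
    rw [hM, (monic_X_add_C u).natDegree_mul hm2,
      (monic_X_add_C v).natDegree_mul
        (monic_prod_of_monic _ _ fun m _ => (monic_X_add_C (w m)).pow 2),
      natDegree_X_add_C, natDegree_X_add_C]
    rw [natDegree_prod _ _ (fun m _ => ((monic_X_add_C (w m)).pow 2).ne_zero)]
    have : ∀ m : Fin (g-1), ((X + C (w m))^2 : Polynomial ℂ).natDegree = 2 := by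
      intro m
      rw [natDegree_pow, natDegree_X_add_C]
    rw [Finset.sum_congr rfl fun m _ => this m, Finset.sum_const, card_univ,
      Fintype.card_fin, smul_eq_mul]
    omega
  have hMdegree : M.degree = ((2*g : ℕ) : WithBot ℕ) := by
    rw [degree_eq_natDegree hMmonic.ne_zero, hMdeg]
  refine ⟨C A * (M - X^(2*g)), ?_, ?_⟩
  · have h1 : degree (M - X^(2*g)) < ((2*g : ℕ) : WithBot ℕ) := by
      have := degree_sub_lt (p := M) (q := X^(2*g))
        (by rw [hMdegree, degree_X_pow]) hMmonic.ne_zero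
        (by rw [hMmonic.leadingCoeff, (monic_X_pow (2*g)).leadingCoeff])
      rwa [hMdegree] at this
    calc degree (C A * (M - X^(2*g)))
        ≤ degree (C A) + degree (M - X^(2*g)) := degree_mul_le _ _
      _ ≤ 0 + degree (M - X^(2*g)) := add_le_add degree_C_le le_rfl
      _ = degree (M - X^(2*g)) := by rw [zero_add]
      _ < ((2*g : ℕ) : WithBot ℕ) := h1
  · intro t r hr
    have hF : (∏ i, (X - C (r i))) = Fpoly pc g a t := by
      rw [hr]; rfl
    -- Psi_t
    have hΨmonic : (Psi0 pc g a + C t).Monic := by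
      refine (Psi0_monic pc g a hg).add_of_left ?_
      refine lt_of_le_of_lt degree_C_le ?_
      rw [degree_eq_natDegree (Psi0_monic pc g a hg).ne_zero, Psi0_natDegree pc g a hg]
      exact_mod_cast (by omega : 0 < g)
    have hΨdeg : (Psi0 pc g a + C t).natDegree = g := by
      rw [natDegree_add_eq_left_of_natDegree_lt
        (by rw [natDegree_C, Psi0_natDegree pc g a hg]; omega),
        Psi0_natDegree pc g a hg]
    obtain ⟨b, hb⟩ := poly_listing_monic _ g hΨmonic hΨdeg
    have hfac : Fpoly pc g a t = ∏ k, (X^2 - C (b k) * X + C pc) := bridge2 pc g a t b hb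
    have hquad : ∀ k : Fin g, ∃ ab : Fin 2 → ℂ,
        (X^2 - C (b k) * X + C pc : Polynomial ℂ) = ∏ e, (X - C (ab e)) :=
      fun k => poly_listing_monic _ 2 (quad_monic _ _) (quad_natDegree _ _)
    choose ab hab using hquad
    set s : Fin g × Fin 2 → ℂ := fun x => ab x.1 x.2 with hs
    have hexp : ∀ k : Fin g, (X^2 - C (b k)*X + C pc : Polynomial ℂ)
        = X^2 - C (ab k 0 + ab k 1) * X + C (ab k 0 * ab k 1) := by
      intro k
      rw [hab k, Fin.prod_univ_two, C_add, C_mul]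
      ring
    have hsum : ∀ k, ab k 0 + ab k 1 = b k := by
      intro k
      have h1 := congrArg (fun q => Polynomial.coeff q 1) (hexp k)
      simp only [coeff_add, coeff_sub, coeff_X_pow, coeff_C_mul, coeff_X_one, coeff_C,
        mul_one] at h1
      norm_num at h1
      linear_combination h1
    have hprod2 : ∀ k, ab k 0 * ab k 1 = pc := by
      intro k
      have h1 := congrArg (fun q => Polynomial.coeff q 0) (hexp k)
      simp only [coeff_add, coeff_sub, coeff_X_pow, coeff_C_mul, coeff_X_zero, coeff_C,
        mul_zero] at h1
      norm_num at h1
      exact h1.symm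
    have hrs : (∏ i, (X - C (r i))) = ∏ x : Fin g × Fin 2, (X - C (s x)) := by
      rw [hF, hfac, Fintype.prod_prod_type]
      exact Finset.prod_congr rfl fun k _ => hab k
    set f : Polynomial ℂ := ∏ x : Fin g × Fin 2, (X - C (s x)) with hfdef
    have hfQ : f = ∏ k, (X^2 - C (b k) * X + C pc) := by
      rw [hfdef, Fintype.prod_prod_type]
      exact Finset.prod_congr rfl fun k _ => (hab k).symm
    -- step 1 : sign lemma + transfer
    have key_r : ∏ i, ∏ j ∈ univ.erase i, (r i - r j)
        = ∏ x : Fin g × Fin 2, ∏ y ∈ univ.erase x, (s x - s y) := by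
      rw [prod_prod_erase_eq r, prod_prod_erase_eq s, hrs]
    have hinner : ∀ x : Fin g × Fin 2, ∏ y ∈ univ.erase x, (s x - s y)
        = eval (s x) (derivative f) := fun x => (eval_derivative_prod_X_sub_C s x).symm
    -- quadratic root facts
    have hQroot : ∀ k (e : Fin 2), (ab k e)^2 - b k * (ab k e) + pc = 0 := by
      intro k e
      have h0 : eval (ab k e) (X^2 - C (b k) * X + C pc) = 0 := by
        rw [hab k, eval_prod]
        refine Finset.prod_eq_zero (mem_univ e) ?_
        simp
      simpa using h0
    have hQeval : ∀ k l (e : Fin 2),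
        eval (ab k e) (X^2 - C (b l) * X + C pc) = (b k - b l) * ab k e := by
      intro k l e
      have h0 := hQroot k e
      simp only [eval_add, eval_sub, eval_mul, eval_pow, eval_X, eval_C]
      linear_combination h0
    -- derivative evals
    have hderiv_eval : ∀ k (e : Fin 2), eval (ab k e) (derivative f)
        = (∏ l ∈ univ.erase k, ((b k - b l) * ab k e)) * (2 * ab k e - b k) := by
      intro k e
      rw [hfQ, derivative_finset_prod, eval_finset_sum]
      rw [Finset.sum_eq_single k]
      · rw [eval_mul, eval_prod]
        congr 1
        · exact Finset.prod_congr rfl fun l _ => hQeval k l e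
        · have hder : derivative (X^2 - C (b k) * X + C pc : Polynomial ℂ)
              = C 2 * X - C (b k) := by
            simp [derivative_X_pow]
            rw [one_add_one_eq_two]; exact (map_ofNat C 2).symm
          rw [hder]
          simp
      · intro l _ hl
        rw [eval_mul, eval_prod]
        apply mul_eq_zero_of_left
        refine Finset.prod_eq_zero (Finset.mem_erase.2 ⟨Ne.symm hl, mem_univ k⟩) ?_
        rw [hab k, eval_prod]
        refine Finset.prod_eq_zero (mem_univ e) ?_
        simp
      · simp
    set Dk : Fin g → ℂ := fun k => ∏ l ∈ univ.erase k, (b k - b l) with hDkdef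
    have hsplit : ∀ k (e : Fin 2), ∏ l ∈ univ.erase k, ((b k - b l) * ab k e)
        = Dk k * (ab k e)^(g-1) := by
      intro k e
      rw [Finset.prod_mul_distrib, Finset.prod_const,
        Finset.card_erase_of_mem (mem_univ k), card_univ, Fintype.card_fin]
    have hEk : ∀ k, eval (ab k 0) (derivative f) * eval (ab k 1) (derivative f)
        = Dk k^2 * pc^(g-1) * (4*pc - (b k)^2) := by
      intro k
      rw [hderiv_eval k 0, hderiv_eval k 1, hsplit k 0, hsplit k 1]
      have h2 : (2*ab k 0 - b k) * (2*ab k 1 - b k) = 4*pc - (b k)^2 := by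
        linear_combination 4*(hprod2 k) - 2*(b k)*(hsum k)
      calc (Dk k * (ab k 0)^(g-1) * (2*ab k 0 - b k)) * (Dk k * (ab k 1)^(g-1) * (2*ab k 1 - b k))
          = Dk k^2 * (ab k 0 * ab k 1)^(g-1) * ((2*ab k 0 - b k) * (2*ab k 1 - b k)) := by
            rw [mul_pow]; ring
        _ = Dk k^2 * pc^(g-1) * (4*pc - (b k)^2) := by rw [hprod2 k, h2]
    have hS : ∏ x : Fin g × Fin 2, eval (s x) (derivative f)
        = (∏ k, Dk k)^2 * pc^(g*(g-1)) * ∏ k, (4*pc - (b k)^2) := by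
      rw [Fintype.prod_prod_type]
      calc ∏ k, ∏ e, eval (s (k, e)) (derivative f)
          = ∏ k, (eval (ab k 0) (derivative f) * eval (ab k 1) (derivative f)) :=
            Finset.prod_congr rfl fun k _ => Fin.prod_univ_two _
        _ = ∏ k, (Dk k^2 * pc^(g-1) * (4*pc - (b k)^2)) :=
            Finset.prod_congr rfl fun k _ => hEk k
        _ = (∏ k, Dk k^2) * (∏ _k : Fin g, pc^(g-1)) * ∏ k, (4*pc - (b k)^2) := by
            rw [Finset.prod_mul_distrib, Finset.prod_mul_distrib]
        _ = (∏ k, Dk k)^2 * pc^(g*(g-1)) * ∏ k, (4*pc - (b k)^2) := by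
            rw [Finset.prod_pow, Finset.prod_const, card_univ, Fintype.card_fin,
              ← pow_mul, Nat.mul_comm (g-1) g]
    -- evaluate Dk products
    have hΨeval : ∀ x : ℂ, ∏ k, (x - b k) = (Psi0 pc g a).eval x + t := by
      intro x
      have h1 : eval x (Psi0 pc g a + C t) = ∏ k, (x - b k) := by
        rw [hb, eval_prod]
        simp
      rw [← h1, eval_add, eval_C]
    have hneg : ∀ x : ℂ, ∏ k, (b k - x) = (-1)^g * ((Psi0 pc g a).eval x + t) := by
      intro x
      have h1 : ∏ k, (b k - x) = ∏ k, ((-1) * (x - b k)) :=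
        Finset.prod_congr rfl fun k _ => by ring
      rw [h1, Finset.prod_mul_distrib, Finset.prod_const, card_univ, Fintype.card_fin,
        hΨeval x]
    have hDkeval : ∀ k, Dk k = eval (b k) (derivative (Psi0 pc g a)) := by
      intro k
      have h1 := eval_derivative_prod_X_sub_C b k
      have h2 : derivative (∏ j, (X - C (b j)) : Polynomial ℂ)
          = derivative (Psi0 pc g a) := by
        rw [← hb]
        simp
      rw [h2] at h1
      rw [hDkdef]
      exact h1.symm
    have hDkprod : (∏ k, Dk k)^2 = (g:ℂ)^(2*g) * ∏ m, ((w m + t))^2 := by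
      have h1 : ∏ k, Dk k = (g:ℂ)^g * ((-1)^g)^(g-1) * ∏ m, (w m + t) := by
        calc ∏ k, Dk k = ∏ k, eval (b k) (derivative (Psi0 pc g a)) :=
              Finset.prod_congr rfl fun k _ => hDkeval k
          _ = ∏ k, ((g:ℂ) * ∏ m, (b k - β m)) := by
              refine Finset.prod_congr rfl fun k _ => ?_
              rw [hβ, eval_mul, eval_C, eval_prod]
              simp
          _ = (g:ℂ)^g * ∏ k, ∏ m, (b k - β m) := by
              rw [Finset.prod_mul_distrib, Finset.prod_const, card_univ, Fintype.card_fin]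
          _ = (g:ℂ)^g * ∏ m, ∏ k, (b k - β m) := by rw [Finset.prod_comm]
          _ = (g:ℂ)^g * ∏ m, ((-1)^g * (w m + t)) := by
              rw [Finset.prod_congr rfl fun m _ => hneg (β m)]
          _ = (g:ℂ)^g * ((-1)^g)^(g-1) * ∏ m, (w m + t) := by
              rw [Finset.prod_mul_distrib, Finset.prod_const, card_univ, Fintype.card_fin]
              ring
      rw [h1]
      have h2 : ((((-1:ℂ))^g)^(g-1))^2 = 1 := by
        rw [← pow_mul, ← pow_mul]
        exact Even.neg_one_pow ⟨g*(g-1), by ring⟩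
      calc ((g:ℂ)^g * ((-1)^g)^(g-1) * ∏ m, (w m + t))^2
          = ((g:ℂ)^g)^2 * (((-1:ℂ)^g)^(g-1))^2 * (∏ m, (w m + t))^2 := by ring
        _ = (g:ℂ)^(2*g) * ∏ m, ((w m + t))^2 := by
            rw [h2, ← pow_mul, Nat.mul_comm g 2, ← Finset.prod_pow]
            ring
    have hbprod : ∏ k, (4*pc - (b k)^2) = (-1)^g * ((u + t) * (v + t)) := by
      have h1 : ∀ k, 4*pc - (b k)^2 = (c0 - b k) * ((b k) - (-c0)) := by
        intro k
        linear_combination -hc0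
      rw [Finset.prod_congr rfl fun k _ => h1 k, Finset.prod_mul_distrib,
        hΨeval c0, hneg (-c0), ← hu, ← hv]
      ring
    -- final assembly
    have harith : 2*g*(2*g-1)/2 = g*(2*g-1) := by
      have h2 : 2*g*(2*g-1) = (g*(2*g-1))*2 := by ring
      rw [h2, Nat.mul_div_cancel _ two_pos]
    rw [sign_lemma (2*g) r, key_r, Finset.prod_congr rfl fun x _ => hinner x, hS,
      hDkprod, hbprod, harith]
    have hMeval : eval t M = (t + u) * ((t + v) * ∏ m, (t + w m)^2) := by
      rw [hM]
      simp [eval_prod]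
    have hQeval2 : eval t (C A * (M - X^(2*g))) = A * (eval t M - t^(2*g)) := by
      simp
    have hsign : (-1:ℂ)^(g*(2*g-1)) * (-1:ℂ)^g = 1 := by
      have h01 : (-1:ℂ)^(2*g-1) = -1 := Odd.neg_one_pow ⟨g-1, by omega⟩
      have h02 : (-1:ℂ)^(g*(2*g-1)) = (-1)^g := by rw [pow_mul', h01]
      rw [h02, ← pow_add]
      exact Even.neg_one_pow ⟨g, by ring⟩
    rw [hQeval2, hMeval, hA]
    have hP23 : (∏ m, (t + w m)^2 : ℂ) = ∏ m, (w m + t)^2 :=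
      Finset.prod_congr rfl fun m _ => by ring
    rw [hP23]
    linear_combination ((g:ℂ)^(2*g) * pc^(g*(g-1)) *
      ((u + t) * (v + t) * ∏ m, (w m + t)^2)) * hsign
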